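/- arXiv:2405.03625 — 2 statements merged into one kernel-verified Lean document; each statement's English description precedes it below -/
import Mathlib

section
/- The generating series Z_w(k)(t) = Σ_{l≥0} N_w(k,l) t^l has radius of convergence at least (b^p - 1)^{-1/p}, which is strictly greater than 1/b. -/
open scoped BigOperators

open Finset

/-- Number of (possibly overlapping) occurrences of the block `w` in `X`. -/
def occCount {α : Type*} [DecidableEq α] (w X : List α) : ℕ :=
  ((List.range X.length).filter fun i => (X.drop i).take w.length = w).length

/-- `Nw b w k l`: the number of strings of length `l` over `{0,…,b-1}` containing
exactly `k` occurrences of `w`. -/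
def Nw (b : ℕ) (w : List (Fin b)) (k l : ℕ) : ℕ :=
  Fintype.card {f : Fin l → Fin b // occCount w (List.ofFn f) = k}

lemma occCount_eq {α : Type*} [DecidableEq α] (w X : List α) :
    occCount w X = ((Finset.range X.length).filter fun i => (X.drop i).take w.length = w).card := rfl

lemma take_drop_ofFn {b l p : ℕ} (f : Fin l → Fin b) (i : ℕ) (h : i + p ≤ l) :
    ((List.ofFn f).drop i).take p = List.ofFn (fun t : Fin p => f ⟨i + t, by omega⟩) := by
  apply List.ext_getElem
  · simp; omega
  · intro n h1 h2
    simp only [List.getElem_take, List.getElem_drop, List.getElem_ofFn]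

-- the injection
def iota {b l : ℕ} (p : ℕ) (hp : 0 < p) (f : Fin l → Fin b) :
    (Fin (l / p) → Fin p → Fin b) × (Fin (l % p) → Fin b) :=
  (fun j t => f ⟨j * p + t, by
      have h1 : ((j : ℕ) + 1) * p ≤ (l / p) * p := Nat.mul_le_mul_right p j.2
      have h2 : (l / p) * p ≤ l := Nat.div_mul_le_self l p
      have h3 : (t : ℕ) < p := t.2
      have h4 : ((j : ℕ) + 1) * p = j * p + p := by ring
      omega⟩,
   fun u => f ⟨(l / p) * p + u, by
      have h2 := Nat.div_add_mod l p
      have h3 : (u : ℕ) < l % p := u.2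
      have : p * (l / p) = (l / p) * p := by ring
      omega⟩)

lemma iota_injective {b l p : ℕ} (hp : 0 < p) :
    Function.Injective (iota (b := b) (l := l) p hp) := by
  intro f f' h
  funext i
  rcases lt_or_ge (i : ℕ) ((l / p) * p) with hi | hi
  · have hj : (i : ℕ) / p < l / p := (Nat.div_lt_iff_lt_mul hp).2 hi
    have ht : (i : ℕ) % p < p := Nat.mod_lt _ hp
    have h1 := congrFun (congrFun (congrArg Prod.fst h) ⟨(i : ℕ) / p, hj⟩) ⟨(i : ℕ) % p, ht⟩
    simp only [iota] at h1
    have he : ((i : ℕ) / p) * p + (i : ℕ) % p = (i : ℕ) := Nat.div_add_mod' _ _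
    have hlt : ((i : ℕ) / p) * p + (i : ℕ) % p < l := by rw [he]; exact i.2
    have e1 : i = (⟨((i : ℕ) / p) * p + (i : ℕ) % p, hlt⟩ : Fin l) := Fin.ext he.symm
    rw [e1]
    exact h1
  · have hdm := Nat.div_add_mod' l p
    have hu : (i : ℕ) - (l / p) * p < l % p := by have := i.2; omega
    have h1 := congrFun (congrArg Prod.snd h) ⟨(i : ℕ) - (l / p) * p, hu⟩
    simp only [iota] at h1
    have he : (l / p) * p + ((i : ℕ) - (l / p) * p) = (i : ℕ) := by omega
    have hlt : (l / p) * p + ((i : ℕ) - (l / p) * p) < l := by rw [he]; exact i.2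
    have e1 : i = (⟨(l / p) * p + ((i : ℕ) - (l / p) * p), hlt⟩ : Fin l) := Fin.ext he.symm
    rw [e1]
    exact h1


lemma main_bound (b : ℕ) (w : List (Fin b)) (hb : 1 < b) (hw : 1 ≤ w.length) (k l : ℕ) :
    Nw b w k l * (b ^ w.length - 1) ^ k ≤
      ((k+1) * (l+1)^k) * ((b ^ w.length - 1) ^ (l / w.length) * ((b ^ w.length) ^ k * b ^ w.length)) := by
  set p := w.length with hp
  have hp0 : 0 < p := hw
  set m := l / p with hm
  set s := l % p with hs
  classical
  set S : Finset (Fin l → Fin b) := univ.filter (fun f => occCount w (List.ofFn f) = k) with hS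
  have hNw : Nw b w k l = S.card := by rw [Nw, Fintype.card_subtype]
  set A : Finset (Fin m) → Finset ((Fin m → Fin p → Fin b) × (Fin s → Fin b)) :=
    (fun T => (Fintype.piFinset (fun j => if j ∈ T then Finset.univ else Finset.univ.erase w.get)) ×ˢ Finset.univ) with hA
  set 𝒯 : Finset (Finset (Fin m)) := univ.powerset.filter (fun T => T.card ≤ k) with hT
  -- step 1: image under iota is contained in the biUnion
  have hsub : S.image (iota p hp0) ⊆ 𝒯.biUnion A := by
    intro Fg hFg
    rcases Finset.mem_image.1 hFg with ⟨f, hfS, hfeq⟩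
    have hocc : occCount w (List.ofFn f) = k := (Finset.mem_filter.1 hfS).2
    set T : Finset (Fin m) := univ.filter (fun j => (Fg.1 j = w.get)) with hTdef
    have hTcard : T.card ≤ k := by
      rw [← hocc, occCount_eq]
      refine Finset.card_le_card_of_injOn (fun j : Fin m => (j : ℕ) * p) ?_ ?_
      · intro j hj
        have hj2 : ((j : ℕ) + 1) * p ≤ m * p := Nat.mul_le_mul_right p j.2
        have hmp : m * p ≤ l := Nat.div_mul_le_self l p
        have hjl : (j : ℕ) * p + p ≤ l := by nlinarith
        simp only [Finset.mem_coe, Finset.mem_filter, Finset.mem_range, List.length_ofFn]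
        refine ⟨by omega, ?_⟩
        rw [take_drop_ofFn f ((j : ℕ) * p) hjl]
        have hFj : Fg.1 j = w.get := (Finset.mem_filter.1 hj).2
        rw [← hfeq] at hFj
        have : (fun t : Fin p => f ⟨(j : ℕ) * p + t, by omega⟩) = w.get := hFj
        rw [this, List.ofFn_get]
      · intro a _ a' _ haa
        exact Fin.ext (Nat.eq_of_mul_eq_mul_right hp0 haa)
    apply Finset.mem_biUnion.2
    refine ⟨T, ?_, ?_⟩
    · rw [hT, Finset.mem_filter]; exact ⟨Finset.mem_powerset.2 (Finset.subset_univ T), hTcard⟩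
    · rw [hA]
      apply Finset.mem_product.2
      constructor
      · apply Fintype.mem_piFinset.2
        intro j
        by_cases hj : j ∈ T
        · simp [hj]
        · simp only [hj, if_false]
          apply Finset.mem_erase.2
          refine ⟨?_, Finset.mem_univ _⟩
          intro hc
          exact hj (Finset.mem_filter.2 ⟨Finset.mem_univ _, hc⟩)
      · exact Finset.mem_univ _
  -- step 2: cardinality of each A T
  have hAcard : ∀ T : Finset (Fin m), (A T).card = (b ^ p) ^ T.card * (b ^ p - 1) ^ (m - T.card) * b ^ s := by
    intro T
    rw [hA]
    rw [Finset.card_product, Fintype.card_piFinset]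
    have h1 : (Finset.univ : Finset (Fin s → Fin b)).card = b ^ s := by
      rw [Finset.card_univ, Fintype.card_fun, Fintype.card_fin, Fintype.card_fin]
    have h2 : ∀ j : Fin m, ((if j ∈ T then (Finset.univ : Finset (Fin p → Fin b)) else Finset.univ.erase w.get)).card
        = if j ∈ T then b ^ p else b ^ p - 1 := by
      intro j
      by_cases hj : j ∈ T <;> simp only [hj, if_true, if_false]
      · rw [Finset.card_univ, Fintype.card_fun, Fintype.card_fin, Fintype.card_fin]
      · rw [Finset.card_erase_of_mem (Finset.mem_univ _), Finset.card_univ, Fintype.card_fun,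
          Fintype.card_fin, Fintype.card_fin]
    have e2 : (univ.filter (fun j => ¬ j ∈ T)).card = m - T.card := by
      rw [Finset.filter_not, Finset.card_sdiff_of_subset (Finset.filter_subset _ _)]
      rw [Finset.card_univ, Fintype.card_fin]
      congr 1
      rw [Finset.filter_univ_mem]
    have e3 : (∏ j : Fin m, if j ∈ T then b ^ p else b ^ p - 1)
        = (b ^ p) ^ T.card * (b ^ p - 1) ^ (m - T.card) := by
      rw [Finset.prod_ite (fun _ => b ^ p) (fun _ => b ^ p - 1), Finset.prod_const,
        Finset.prod_const, Finset.filter_univ_mem, e2]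
    rw [Finset.prod_congr rfl (fun j _ => h2 j), h1, e3]
  -- step 3: put everything together
  have hstart : Nw b w k l ≤ ∑ T ∈ 𝒯, (A T).card := by
    rw [hNw, ← Finset.card_image_of_injective S (iota_injective hp0)]
    exact le_trans (Finset.card_le_card hsub) Finset.card_biUnion_le
  have hbp1 : b ^ p - 1 ≤ b ^ p := Nat.sub_le _ _
  have hterm : ∀ T ∈ 𝒯, (A T).card * (b ^ p - 1) ^ k
      ≤ (b ^ p - 1) ^ m * ((b ^ p) ^ k * b ^ p) := by
    intro T hTmem
    have htk : T.card ≤ k := (Finset.mem_filter.1 hTmem).2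
    have htm : T.card ≤ m := le_trans (Finset.card_le_univ T) (by simp)
    have hsle : b ^ s ≤ b ^ p :=
      Nat.pow_le_pow_right (le_of_lt (lt_of_lt_of_le Nat.one_lt_two hb)) (le_of_lt (Nat.mod_lt l hp0))
    have key : (b ^ p) ^ T.card * ((b ^ p - 1) ^ (m - T.card) * (b ^ p - 1) ^ k)
        ≤ (b ^ p) ^ k * (b ^ p - 1) ^ m := by
      rw [← pow_add]
      have he : m - T.card + k = (k - T.card) + m := by omega
      rw [he, pow_add, ← mul_assoc]
      apply Nat.mul_le_mul_right
      calc (b ^ p) ^ T.card * (b ^ p - 1) ^ (k - T.card)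
          ≤ (b ^ p) ^ T.card * (b ^ p) ^ (k - T.card) :=
            Nat.mul_le_mul_left _ (Nat.pow_le_pow_left hbp1 _)
        _ = (b ^ p) ^ k := by rw [← pow_add]; congr 1; omega
    rw [hAcard T]
    calc (b ^ p) ^ T.card * (b ^ p - 1) ^ (m - T.card) * b ^ s * (b ^ p - 1) ^ k
        ≤ (b ^ p) ^ T.card * (b ^ p - 1) ^ (m - T.card) * b ^ p * (b ^ p - 1) ^ k := by
          gcongr
      _ = ((b ^ p) ^ T.card * ((b ^ p - 1) ^ (m - T.card) * (b ^ p - 1) ^ k)) * b ^ p := by ring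
      _ ≤ ((b ^ p) ^ k * (b ^ p - 1) ^ m) * b ^ p := Nat.mul_le_mul_right _ key
      _ = (b ^ p - 1) ^ m * ((b ^ p) ^ k * b ^ p) := by ring
  have hcount : 𝒯.card ≤ (k + 1) * (l + 1) ^ k := by
    have hsub2 : 𝒯 ⊆ (Finset.range (k + 1)).biUnion (fun t => Finset.powersetCard t univ) := by
      intro T hTmem
      have htk : T.card ≤ k := (Finset.mem_filter.1 hTmem).2
      apply Finset.mem_biUnion.2
      exact ⟨T.card, Finset.mem_range.2 (by omega),
        Finset.mem_powersetCard.2 ⟨Finset.subset_univ T, rfl⟩⟩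
    calc 𝒯.card ≤ ((Finset.range (k + 1)).biUnion (fun t => Finset.powersetCard t univ)).card :=
          Finset.card_le_card hsub2
      _ ≤ ∑ t ∈ Finset.range (k + 1), (Finset.powersetCard t (univ : Finset (Fin m))).card :=
          Finset.card_biUnion_le
      _ ≤ ∑ _t ∈ Finset.range (k + 1), (l + 1) ^ k := by
          apply Finset.sum_le_sum
          intro t ht
          rw [Finset.card_powersetCard, Finset.card_univ, Fintype.card_fin]
          calc m.choose t ≤ m ^ t := Nat.choose_le_pow m t
            _ ≤ (l + 1) ^ t := Nat.pow_le_pow_left (by have := Nat.div_le_self l p; omega) t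
            _ ≤ (l + 1) ^ k := Nat.pow_le_pow_right (by omega) (by
                have := Finset.mem_range.1 ht; omega)
      _ = (k + 1) * (l + 1) ^ k := by rw [Finset.sum_const, Finset.card_range, smul_eq_mul]
  calc Nw b w k l * (b ^ p - 1) ^ k
      ≤ (∑ T ∈ 𝒯, (A T).card) * (b ^ p - 1) ^ k := Nat.mul_le_mul_right _ hstart
    _ = ∑ T ∈ 𝒯, (A T).card * (b ^ p - 1) ^ k := by rw [Finset.sum_mul]
    _ ≤ ∑ _T ∈ 𝒯, (b ^ p - 1) ^ m * ((b ^ p) ^ k * b ^ p) := Finset.sum_le_sum hterm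
    _ = 𝒯.card * ((b ^ p - 1) ^ m * ((b ^ p) ^ k * b ^ p)) := by
        rw [Finset.sum_const, smul_eq_mul]
    _ ≤ ((k + 1) * (l + 1) ^ k) * ((b ^ p - 1) ^ m * ((b ^ p) ^ k * b ^ p)) :=
        Nat.mul_le_mul_right _ hcount


lemma analytic_part (b : ℕ) (hb : 1 < b) (p : ℕ) (hw : 1 ≤ p) (k : ℕ) (N : ℕ → ℕ)
    (hN : ∀ l, N l * (b ^ p - 1) ^ k ≤ ((k+1) * (l+1)^k) * ((b ^ p - 1) ^ (l / p) * ((b ^ p) ^ k * b ^ p))) :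
    (1 / (b : ℝ) < ((b : ℝ) ^ p - 1) ^ (-(1 : ℝ) / (p : ℝ))) ∧
    ∀ x : ℝ, |x| < ((b : ℝ) ^ p - 1) ^ (-(1 : ℝ) / (p : ℝ)) →
      Summable fun l : ℕ => (N l : ℝ) * x ^ l := by
  have hb1 : (1 : ℝ) < (b : ℝ) := by exact_mod_cast hb
  have hb0 : (0 : ℝ) < (b : ℝ) := by linarith
  have hp0 : (0 : ℝ) < (p : ℝ) := by exact_mod_cast hw
  have hbp : (1 : ℝ) < (b : ℝ) ^ p := one_lt_pow₀ hb1 (by omega)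
  set r : ℝ := (b : ℝ) ^ p - 1 with hr
  have hr0 : 0 < r := by simp [hr]; linarith
  have hr1 : 1 ≤ r := by
    have h2 : (2 : ℝ) ≤ (b : ℝ) := by exact_mod_cast hb
    have h3 : (b : ℝ) ≤ (b : ℝ) ^ p := le_self_pow₀ (by linarith) (by omega)
    simp only [hr]; linarith
  set ρ : ℝ := r ^ ((1 : ℝ) / (p : ℝ)) with hρ
  have hρ1 : 1 ≤ ρ := by
    rw [hρ]
    calc (1:ℝ) = r ^ (0:ℝ) := (Real.rpow_zero r).symm
      _ ≤ r ^ ((1:ℝ)/(p:ℝ)) := Real.rpow_le_rpow_of_exponent_le hr1 (by positivity)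
  have hρ0 : 0 < ρ := lt_of_lt_of_le one_pos hρ1
  have hradius : r ^ (-(1 : ℝ) / (p : ℝ)) = ρ⁻¹ := by
    rw [hρ, neg_div, Real.rpow_neg (le_of_lt hr0)]
  have hbrpow : ((b : ℝ) ^ p) ^ ((1:ℝ)/(p:ℝ)) = (b : ℝ) := by
    rw [← Real.rpow_natCast (b : ℝ) p, ← Real.rpow_mul (le_of_lt hb0)]
    rw [mul_one_div, div_self (ne_of_gt hp0), Real.rpow_one]
  have hρltb : ρ < (b : ℝ) := by
    rw [hρ, ← hbrpow]
    exact Real.rpow_lt_rpow (le_of_lt hr0) (by simp only [hr]; linarith) (by positivity)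
  have hρpow : ρ ^ p = r := by
    rw [hρ, ← Real.rpow_natCast (r ^ ((1:ℝ)/(p:ℝ))) p, ← Real.rpow_mul (le_of_lt hr0)]
    rw [one_div_mul_eq_div, div_self (ne_of_gt hp0), Real.rpow_one]
  constructor
  · rw [hradius, one_div]
    exact (inv_lt_inv₀ hb0 hρ0).2 hρltb
  · intro x hx
    rw [hradius] at hx
    set y : ℝ := ρ * |x| with hy
    have hy0 : 0 ≤ y := by positivity
    have hy1 : y < 1 := by
      rw [hy]
      calc ρ * |x| < ρ * ρ⁻¹ := by
            apply mul_lt_mul_of_pos_left hx hρ0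
        _ = 1 := mul_inv_cancel₀ (ne_of_gt hρ0)
    -- summability of (l+1)^k * y^l
    have hsum : Summable (fun l : ℕ => ((l : ℝ) + 1) ^ k * y ^ l) := by
      have hrep : ∀ l : ℕ, ((l : ℝ) + 1) ^ k * y ^ l
          = ∑ j ∈ Finset.range (k + 1), ((l : ℝ) ^ j * y ^ l * (k.choose j : ℝ)) := by
        intro l
        rw [add_pow, Finset.sum_mul]
        apply Finset.sum_congr rfl
        intro j hj
        simp [one_pow]
        ring
      apply Summable.congr _ (fun l => (hrep l).symm)
      apply summable_sum
      intro j hj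
      have : Summable (fun l : ℕ => (l : ℝ) ^ j * y ^ l) := by
        apply summable_pow_mul_geometric_of_norm_lt_one
        rw [Real.norm_eq_abs, abs_of_nonneg hy0]
        exact hy1
      exact this.mul_right _
    -- the bound
    have h1n : (1:ℕ) ≤ b ^ p := Nat.one_le_pow _ _ (by omega)
    have hbound : ∀ l : ℕ, ‖(N l : ℝ) * x ^ l‖
        ≤ ((((k:ℝ)+1) * (((b:ℝ)^p)^k * (b:ℝ)^p)) / r ^ k) * (((l : ℝ) + 1) ^ k * y ^ l) := by
      intro l
      have h := hN l
      have hcast : (N l : ℝ) * r ^ k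
          ≤ ((k:ℝ)+1) * ((l:ℝ)+1)^k * (r ^ (l / p) * (((b:ℝ)^p)^k * (b:ℝ)^p)) := by
        have e1 : (N l : ℝ) * r ^ k = ((N l * (b^p-1)^k : ℕ) : ℝ) := by
          push_cast [Nat.cast_sub h1n]
          rw [hr]
        have e2 : ((((k+1) * (l+1)^k) * ((b ^ p - 1) ^ (l / p) * ((b ^ p) ^ k * b ^ p)) : ℕ) : ℝ)
            = ((k:ℝ)+1) * ((l:ℝ)+1)^k * (r ^ (l / p) * (((b:ℝ)^p)^k * (b:ℝ)^p)) := by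
          push_cast [Nat.cast_sub h1n]
          rw [hr]
        rw [e1, ← e2]
        exact_mod_cast h
      -- r ^ (l/p) ≤ ρ ^ l
      have hrl : r ^ (l / p) ≤ ρ ^ l := by
        rw [← hρpow, ← pow_mul]
        apply pow_le_pow_right₀ hρ1
        rw [mul_comm]
        exact Nat.div_mul_le_self l p
      have hNle : (N l : ℝ)
          ≤ (((k:ℝ)+1) * (((b:ℝ)^p)^k * (b:ℝ)^p) / r ^ k) * (((l:ℝ)+1)^k * ρ ^ l) := by
        rw [div_mul_eq_mul_div, le_div_iff₀ (by positivity)]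
        calc (N l : ℝ) * r ^ k
            ≤ ((k:ℝ)+1) * ((l:ℝ)+1)^k * (r ^ (l / p) * (((b:ℝ)^p)^k * (b:ℝ)^p)) := hcast
          _ ≤ ((k:ℝ)+1) * ((l:ℝ)+1)^k * (ρ ^ l * (((b:ℝ)^p)^k * (b:ℝ)^p)) := by
              have hk0 : (0:ℝ) ≤ ((k:ℝ)+1) * ((l:ℝ)+1)^k := by positivity
              apply mul_le_mul_of_nonneg_left _ hk0
              apply mul_le_mul_of_nonneg_right hrl (by positivity)
          _ = ((k:ℝ)+1) * (((b:ℝ)^p)^k * (b:ℝ)^p) * (((l:ℝ)+1)^k * ρ ^ l) := by ring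
      rw [norm_mul, norm_pow, Real.norm_eq_abs, Real.norm_eq_abs, Nat.abs_cast]
      calc (N l : ℝ) * |x| ^ l
          ≤ ((((k:ℝ)+1) * (((b:ℝ)^p)^k * (b:ℝ)^p)) / r ^ k) * (((l:ℝ)+1)^k * ρ ^ l) * |x| ^ l := by
            apply mul_le_mul_of_nonneg_right hNle (by positivity)
        _ = ((((k:ℝ)+1) * (((b:ℝ)^p)^k * (b:ℝ)^p)) / r ^ k) * (((l:ℝ)+1)^k * y ^ l) := by
            rw [hy, mul_pow]
            ring
    exact Summable.of_norm_bounded (hsum.mul_left _) hbound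


/-- The generating series `Z_w(k)(t) = Σ_l N_w(k,l) t^l` has radius of convergence at
least `(b^p - 1)^{-1/p}`, which is strictly greater than `1/b`. -/
theorem stmt1 (b : ℕ) (hb : 1 < b) (w : List (Fin b)) (hw : 1 ≤ w.length) (k : ℕ) :
    (1 / (b : ℝ) < ((b : ℝ) ^ w.length - 1) ^ (-(1 : ℝ) / (w.length : ℝ))) ∧
    ∀ x : ℝ, |x| < ((b : ℝ) ^ w.length - 1) ^ (-(1 : ℝ) / (w.length : ℝ)) →
      Summable fun l : ℕ => (Nw b w k l : ℝ) * x ^ l := by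
  exact analytic_part b hb w.length hw k (Nw b w k) (main_bound b w hb hw k)
end

section
/- For k ≥ 1 and any string s of length p-1, the generating series satisfy Z_w(s,k)(t) = t^{2-p} Z_w(s,0,u)(t) · Z_w(v,k-1)(t), where u and v are the (p-1)-prefix and (p-1)-suffix of w respectively. -/
open scoped BigOperators
open PowerSeries

/-- Number of strings of length `l` over `{0,…,b-1}` with exactly `k` occurrences of `w`,
starting with `x` and ending with `y` (an empty `x` or `y` imposes no constraint). -/
def Nxy (b : ℕ) (w x y : List (Fin b)) (k l : ℕ) : ℕ :=
  Fintype.card {f : Fin l → Fin b //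
    occCount w (List.ofFn f) = k ∧ x <+: List.ofFn f ∧ y <:+ List.ofFn f}

/-- The generating series `Z_w(x,k,y)(t)` as a formal power series over `ℚ`. -/
noncomputable def Zser (b : ℕ) (w x y : List (Fin b)) (k : ℕ) : PowerSeries ℚ :=
  PowerSeries.mk fun l => (Nxy b w x y k l : ℚ)

section Aux

variable {b : ℕ}

lemma occCount_eq_card (w X : List (Fin b)) :
    occCount w X = ((Finset.range X.length).filter fun i => (X.drop i).take w.length = w).card :=
  rfl

/-- An occurrence fits inside the string. -/
lemma occ_le (w X : List (Fin b)) (hw : 1 ≤ w.length) {i : ℕ}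
    (h : (X.drop i).take w.length = w) : i + w.length ≤ X.length := by
  have := congrArg List.length h
  simp [List.length_take, List.length_drop] at this
  omega

lemma occCount_eq_zero_iff (w X : List (Fin b)) (hw : 1 ≤ w.length) :
    occCount w X = 0 ↔ ∀ r, (X.drop r).take w.length ≠ w := by
  rw [occCount_eq_card, Finset.card_eq_zero, Finset.filter_eq_empty_iff]
  constructor
  · intro h r hr
    have hle := occ_le w X hw hr
    exact h (Finset.mem_range.2 (by omega)) hr
  · intro h i _ ; exact h i

lemma occ_pos_exists (w X : List (Fin b)) {k : ℕ} (hw : 1 ≤ w.length) (hk : 1 ≤ k)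
    (h : occCount w X = k) : ∃ q, (X.drop q).take w.length = w := by
  by_contra hc
  push_neg at hc
  rw [(occCount_eq_zero_iff w X hw).2 hc] at h
  omega

/-- window transfer: a window inside a prefix. -/
lemma occ_take (w X : List (Fin b)) {a r : ℕ} (h : r + w.length ≤ a) :
    ((X.take a).drop r).take w.length = (X.drop r).take w.length := by
  rw [List.drop_take, List.take_take]
  congr 1
  omega

/-- Splitting the count at a leftmost occurrence. -/
lemma occCount_split (w X : List (Fin b)) (hw : 1 ≤ w.length) (q : ℕ)
    (hq : (X.drop q).take w.length = w)
    (hmin : ∀ r < q, (X.drop r).take w.length ≠ w) :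
    occCount w X = 1 + occCount w (X.drop (q + 1)) := by
  have hqle : q + w.length ≤ X.length := occ_le w X hw hq
  rw [occCount_eq_card, occCount_eq_card]
  have hsplit : Finset.range X.length =
      Finset.range (q+1) ∪ Finset.Ico (q+1) X.length := by
    simp only [Finset.range_eq_Ico]
    exact (Finset.Ico_union_Ico_eq_Ico (by omega) (by omega)).symm
  rw [hsplit, Finset.filter_union, Finset.card_union_of_disjoint]
  · congr 1
    · -- the left part is exactly {q}
      have : (Finset.range (q+1)).filter (fun i => (X.drop i).take w.length = w) = {q} := by
        ext r
        simp only [Finset.mem_coe, Finset.mem_filter, Finset.mem_range, Finset.mem_singleton]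
        constructor
        · rintro ⟨hr1, hr2⟩
          by_contra hne
          exact hmin r (by omega) hr2
        · rintro rfl
          exact ⟨by omega, hq⟩
      rw [this, Finset.card_singleton]
    · -- right part matches occurrences of the dropped string
      have hlen : (X.drop (q+1)).length = X.length - (q+1) := by simp
      rw [hlen]
      apply Finset.card_nbij' (fun r => r - (q+1)) (fun r => r + (q+1))
      · intro a ha
        simp only [Finset.mem_coe, Finset.mem_filter, Finset.mem_Ico] at ha
        simp only [Finset.mem_coe, Finset.mem_filter, Finset.mem_range]
        refine ⟨by omega, ?_⟩
        rw [List.drop_drop]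
        have : q + 1 + (a - (q+1)) = a := by omega
        rw [this]
        exact ha.2
      · intro a ha
        simp only [Finset.mem_coe, Finset.mem_filter, Finset.mem_range] at ha
        simp only [Finset.mem_coe, Finset.mem_filter, Finset.mem_Ico]
        refine ⟨⟨by omega, by omega⟩, ?_⟩
        rw [List.drop_drop] at ha
        have : q + 1 + a = a + (q+1) := by omega
        rw [this] at ha
        exact ha.2
      · intro a ha
        simp only [Finset.mem_coe, Finset.mem_filter, Finset.mem_Ico] at ha
        dsimp only
        omega
      · intro a ha
        simp only [Finset.mem_coe, Finset.mem_filter, Finset.mem_range] at ha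
        dsimp only
        omega
  · apply Finset.disjoint_filter_filter
    rw [Finset.disjoint_left]
    intro a ha hb
    simp only [Finset.mem_range] at ha
    simp only [Finset.mem_Ico] at hb
    omega

/-- All length-`l` strings as a finset of lists. -/
def Lfin (b l : ℕ) : Finset (List (Fin b)) :=
  Finset.image List.ofFn (Finset.univ : Finset (Fin l → Fin b))

lemma mem_Lfin {l : ℕ} {L : List (Fin b)} : L ∈ Lfin b l ↔ L.length = l := by
  constructor
  · rintro h
    simp only [Lfin, Finset.mem_image] at h
    obtain ⟨f, -, rfl⟩ := h
    simp
  · rintro rfl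
    simp only [Lfin, Finset.mem_image]
    exact ⟨L.get, Finset.mem_univ _, List.ofFn_get L⟩

lemma Nxy_eq_card (w x y : List (Fin b)) (k l : ℕ) :
    Nxy b w x y k l =
      ((Lfin b l).filter fun L => occCount w L = k ∧ x <+: L ∧ y <:+ L).card := by
  classical
  rw [Nxy, Fintype.card_subtype, Lfin, Finset.filter_image,
    Finset.card_image_of_injective _ List.ofFn_injective]

end Aux

section Main

variable {b : ℕ}

open scoped Classical in
/-- Position of the leftmost occurrence (junk value if none). -/
noncomputable def fOcc (w X : List (Fin b)) : ℕ :=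
  if h : ∃ q, (X.drop q).take w.length = w then Nat.find h else 0

lemma fOcc_spec {w X : List (Fin b)} (h : ∃ q, (X.drop q).take w.length = w) :
    (X.drop (fOcc w X)).take w.length = w ∧
      ∀ r < fOcc w X, (X.drop r).take w.length ≠ w := by
  rw [fOcc, dif_pos h]
  exact ⟨Nat.find_spec h, fun r hr => Nat.find_min h hr⟩

lemma fOcc_eq {w X : List (Fin b)} {q : ℕ} (hq : (X.drop q).take w.length = w)
    (hmin : ∀ r < q, (X.drop r).take w.length ≠ w) : fOcc w X = q := by
  have h : ∃ q, (X.drop q).take w.length = w := ⟨q, hq⟩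
  rw [fOcc, dif_pos h]
  refine le_antisymm (Nat.find_min' h hq) ?_
  by_contra hlt
  exact hmin _ (by omega) (Nat.find_spec h)

lemma main_cards (w : List (Fin b)) (hw : 1 ≤ w.length) (s : List (Fin b))
    (hs : s.length = w.length - 1) (k : ℕ) (hk : 1 ≤ k) (l m : ℕ)
    (hlm : l + w.length = m + 2) :
    ((Lfin b l).filter fun L =>
        occCount w L = k ∧ s <+: L ∧ ([] : List (Fin b)) <:+ L).card =
      ∑ ij ∈ Finset.HasAntidiagonal.antidiagonal m,
        ((Lfin b ij.1).filter fun L =>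
            occCount w L = 0 ∧ s <+: L ∧ w.take (w.length - 1) <:+ L).card *
        ((Lfin b ij.2).filter fun L =>
            occCount w L = k - 1 ∧ w.drop 1 <+: L ∧ ([] : List (Fin b)) <:+ L).card := by
  classical
  have hf : ∀ L ∈ (Lfin b l).filter fun L =>
      occCount w L = k ∧ s <+: L ∧ ([] : List (Fin b)) <:+ L,
      (fOcc w L + w.length - 1, m - (fOcc w L + w.length - 1)) ∈ Finset.HasAntidiagonal.antidiagonal m := by
    intro L hL
    simp only [Finset.mem_coe, Finset.mem_filter, mem_Lfin] at hL
    obtain ⟨hLl, hocc, -, -⟩ := hL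
    obtain ⟨hq, -⟩ := fOcc_spec (occ_pos_exists w L hw hk hocc)
    have hqle : fOcc w L + w.length ≤ L.length := occ_le w L hw hq
    rw [Finset.HasAntidiagonal.mem_antidiagonal]
    omega
  rw [Finset.card_eq_sum_card_fiberwise hf]
  apply Finset.sum_congr rfl
  rintro ⟨i, j⟩ hij
  rw [Finset.HasAntidiagonal.mem_antidiagonal] at hij
  rw [← Finset.card_product]
  apply Finset.card_nbij' (fun L => (L.take i, L.drop (i + 2 - w.length)))
    (fun z => z.1 ++ (w.drop (w.length - 1) ++ z.2.drop (w.length - 1)))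
  · -- forward membership
    intro L hL
    simp only [Finset.mem_coe, Finset.mem_filter, mem_Lfin, Prod.mk.injEq] at hL
    obtain ⟨⟨hLl, hocc, hpre, -⟩, hfib1, hfib2⟩ := hL
    obtain ⟨hq, hqmin⟩ := fOcc_spec (occ_pos_exists w L hw hk hocc)
    set q := fOcc w L with hqdef
    have hqle : q + w.length ≤ L.length := occ_le w L hw hq
    have hslen : s.length = w.length - 1 := hs
    have hiq : i + 1 = q + w.length := by omega
    have hlj : l = q + 1 + j := by omega
    simp only [Finset.mem_coe, Finset.mem_product, Finset.mem_filter, mem_Lfin]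
    have htklen : (L.take i).length = i := by
      rw [List.length_take]; omega
    refine ⟨⟨htklen, ?_, ?_, ?_⟩, ?_, ?_, ?_, List.nil_suffix⟩
    · -- occCount of the prefix part is 0
      rw [occCount_eq_zero_iff _ _ hw]
      intro r hr
      have hrle : r + w.length ≤ i := by
        have := occ_le w (L.take i) hw hr
        omega
      rw [occ_take w L hrle] at hr
      exact hqmin r (by omega) hr
    · -- s is a prefix of L.take i
      rw [List.prefix_iff_eq_take] at hpre ⊢
      rw [List.take_take, min_eq_left (by omega)]
      exact hpre
    · -- u is a suffix of L.take i
      rw [List.suffix_iff_eq_drop]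
      have hulen : (w.take (w.length - 1)).length = w.length - 1 := by
        rw [List.length_take]; omega
      rw [htklen, hulen]
      rw [show i - (w.length - 1) = q from by omega, List.drop_take,
        show i - q = w.length - 1 from by omega]
      have h2 := congrArg (List.take (w.length - 1)) hq
      rw [List.take_take, min_eq_left (by omega)] at h2
      exact h2.symm
    · -- length of the second part
      rw [List.length_drop]; omega
    · -- occCount of the second part
      have hsplit := occCount_split w L hw q hq hqmin
      rw [show i + 2 - w.length = q + 1 from by omega]
      omega
    · -- v is a prefix of the second part
      rw [List.prefix_iff_eq_take]
      have hvlen : (w.drop 1).length = w.length - 1 := by rw [List.length_drop]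
      rw [hvlen, show i + 2 - w.length = q + 1 from by omega]
      have h2 := congrArg (List.drop 1) hq
      rw [List.drop_take, List.drop_drop] at h2
      exact h2.symm
  · -- backward membership
    intro z hz
    obtain ⟨Y₁, Y₂⟩ := z
    simp only [Finset.mem_coe, Finset.mem_product, Finset.mem_filter, mem_Lfin] at hz
    obtain ⟨⟨hY1l, hocc1, hs1, hu1⟩, hY2l, hocc2, hv2, -⟩ := hz
    have hulen : (w.take (w.length - 1)).length = w.length - 1 := by
      rw [List.length_take]; omega
    have hvlen : (w.drop 1).length = w.length - 1 := by rw [List.length_drop]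
    have hip : w.length - 1 ≤ i := by
      have := hu1.length_le; omega
    have hjp : w.length - 1 ≤ j := by
      have := hv2.length_le; omega
    set q := i + 1 - w.length with hqdef
    have hiq : i + 1 = q + w.length := by omega
    set G := Y₁ ++ (w.drop (w.length - 1) ++ Y₂.drop (w.length - 1)) with hGdef
    have hY1q : Y₁.drop q = w.take (w.length - 1) := by
      rw [List.suffix_iff_eq_drop] at hu1
      rw [hu1, hY1l, hulen]
      congr 1; omega
    have hGq : G.drop q = w ++ Y₂.drop (w.length - 1) := by
      rw [hGdef, List.drop_append_of_le_length (by omega), hY1q, ← List.append_assoc,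
        List.take_append_drop]
    have hGlen : G.length = l := by
      rw [hGdef]
      simp only [List.length_append, List.length_drop, hY1l, hY2l]
      omega
    have hoccq : (G.drop q).take w.length = w := by
      rw [hGq]; exact List.take_left
    have hGi : G.take i = Y₁ := by
      rw [hGdef, ← hY1l]; exact List.take_left
    have hmin : ∀ r < q, (G.drop r).take w.length ≠ w := by
      intro r hr hcon
      have hrle : r + w.length ≤ i := by omega
      rw [← occ_take w G hrle, hGi] at hcon
      exact (occCount_eq_zero_iff w Y₁ hw).1 hocc1 r hcon
    have hGq1 : G.drop (q + 1) = Y₂ := by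
      rw [show q + 1 = q + 1 from rfl, ← List.drop_drop, hGq,
        List.drop_append_of_le_length (by omega)]
      rw [List.prefix_iff_eq_take] at hv2
      rw [hvlen] at hv2
      rw [show (w.drop 1) = Y₂.take (w.length - 1) from hv2, List.take_append_drop]
    simp only [Finset.mem_coe, Finset.mem_filter, mem_Lfin, Prod.mk.injEq]
    have hoccG : occCount w G = k := by
      have := occCount_split w G hw q hoccq hmin
      rw [hGq1] at this
      omega
    have hfO : fOcc w G = q := fOcc_eq hoccq hmin
    exact ⟨⟨hGlen, hoccG, hs1.trans (List.prefix_append _ _), List.nil_suffix⟩,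
      by rw [hfO]; omega, by rw [hfO]; omega⟩
  · -- left inverse
    intro L hL
    simp only [Finset.mem_coe, Finset.mem_filter, mem_Lfin, Prod.mk.injEq] at hL
    obtain ⟨⟨hLl, hocc, hpre, -⟩, hfib1, hfib2⟩ := hL
    obtain ⟨hq, hqmin⟩ := fOcc_spec (occ_pos_exists w L hw hk hocc)
    set q := fOcc w L with hqdef
    have hqle : q + w.length ≤ L.length := occ_le w L hw hq
    have hiq : i + 1 = q + w.length := by omega
    have e1 : (L.drop (i + 2 - w.length)).drop (w.length - 1) = L.drop (i + 1) := by
      rw [List.drop_drop]; congr 1; omega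
    have e2 : w.drop (w.length - 1) = (L.drop i).take 1 := by
      have h2 := congrArg (List.drop (w.length - 1)) hq
      rw [List.drop_take, List.drop_drop, show q + (w.length - 1) = i from by omega,
        show w.length - (w.length - 1) = 1 from by omega] at h2
      exact h2.symm
    simp only
    rw [e1, e2, ← List.append_assoc, ← List.take_add, List.take_append_drop]
  · -- right inverse
    intro z hz
    obtain ⟨Y₁, Y₂⟩ := z
    simp only [Finset.mem_coe, Finset.mem_product, Finset.mem_filter, mem_Lfin] at hz
    obtain ⟨⟨hY1l, hocc1, hs1, hu1⟩, hY2l, hocc2, hv2, -⟩ := hz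
    have hulen : (w.take (w.length - 1)).length = w.length - 1 := by
      rw [List.length_take]; omega
    have hvlen : (w.drop 1).length = w.length - 1 := by rw [List.length_drop]
    have hip : w.length - 1 ≤ i := by
      have := hu1.length_le; omega
    have hjp : w.length - 1 ≤ j := by
      have := hv2.length_le; omega
    set q := i + 1 - w.length with hqdef
    have hiq : i + 1 = q + w.length := by omega
    set G := Y₁ ++ (w.drop (w.length - 1) ++ Y₂.drop (w.length - 1)) with hGdef
    have hY1q : Y₁.drop q = w.take (w.length - 1) := by
      rw [List.suffix_iff_eq_drop] at hu1
      rw [hu1, hY1l, hulen]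
      congr 1; omega
    have hGq : G.drop q = w ++ Y₂.drop (w.length - 1) := by
      rw [hGdef, List.drop_append_of_le_length (by omega), hY1q, ← List.append_assoc,
        List.take_append_drop]
    have hGi : G.take i = Y₁ := by
      rw [hGdef, ← hY1l]; exact List.take_left
    have hGq1 : G.drop (q + 1) = Y₂ := by
      rw [show q + 1 = q + 1 from rfl, ← List.drop_drop, hGq,
        List.drop_append_of_le_length (by omega)]
      rw [List.prefix_iff_eq_take] at hv2
      rw [hvlen] at hv2
      rw [show (w.drop 1) = Y₂.take (w.length - 1) from hv2, List.take_append_drop]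
    simp only [Prod.mk.injEq]
    rw [show i + 2 - w.length = q + 1 from by omega]
    exact ⟨hGi, hGq1⟩

end Main

section Final

variable {b : ℕ}

lemma main_Nxy (w : List (Fin b)) (hw : 1 ≤ w.length) (s : List (Fin b))
    (hs : s.length = w.length - 1) (k : ℕ) (hk : 1 ≤ k) (l m : ℕ)
    (hlm : l + w.length = m + 2) :
    Nxy b w s [] k l = ∑ ij ∈ Finset.HasAntidiagonal.antidiagonal m,
      Nxy b w s (w.take (w.length - 1)) 0 ij.1 * Nxy b w (w.drop 1) [] (k - 1) ij.2 := by
  rw [Nxy_eq_card, main_cards w hw s hs k hk l m hlm]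
  exact Finset.sum_congr rfl fun ij _ => by rw [Nxy_eq_card, Nxy_eq_card]

lemma Nxy_zero_short (w x : List (Fin b)) {k l : ℕ} (hw : 1 ≤ w.length) (hk : 1 ≤ k)
    (hl : l < w.length) : Nxy b w x [] k l = 0 := by
  rw [Nxy_eq_card, Finset.card_eq_zero, Finset.filter_eq_empty_iff]
  rintro L hL ⟨h1, -, -⟩
  rw [mem_Lfin] at hL
  obtain ⟨q, hq⟩ := occ_pos_exists w L hw hk h1
  have := occ_le w L hw hq
  omega

lemma Nxy_suffix_short (w x y : List (Fin b)) {k l : ℕ} (hl : l < y.length) :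
    Nxy b w x y k l = 0 := by
  rw [Nxy_eq_card, Finset.card_eq_zero, Finset.filter_eq_empty_iff]
  rintro L hL ⟨-, -, h3⟩
  rw [mem_Lfin] at hL
  have := h3.length_le
  omega

end Final

/-- `Z_w(s,k) = t^{2-p} Z_w(s,0,u) Z_w(v,k-1)` (stated multiplied through by `t^p`
to avoid negative exponents): `t^p Z_w(s,k) = t^2 Z_w(s,0,u) Z_w(v,k-1)`. -/
theorem stmt4 (b : ℕ) (hb : 1 < b) (w : List (Fin b)) (hw : 1 ≤ w.length)
    (s : List (Fin b)) (hs : s.length = w.length - 1) (k : ℕ) (hk : 1 ≤ k) :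
    (X : PowerSeries ℚ) ^ w.length * Zser b w s [] k =
      X ^ 2 * Zser b w s (w.take (w.length - 1)) 0 * Zser b w (w.drop 1) [] (k - 1) := by
  apply PowerSeries.ext
  intro n
  rw [mul_comm ((X : PowerSeries ℚ) ^ w.length), PowerSeries.coeff_mul_X_pow']
  rw [show (X : PowerSeries ℚ) ^ 2 * Zser b w s (w.take (w.length - 1)) 0 *
        Zser b w (w.drop 1) [] (k - 1) =
      (Zser b w s (w.take (w.length - 1)) 0 * Zser b w (w.drop 1) [] (k - 1)) *
        X ^ 2 from by ring, PowerSeries.coeff_mul_X_pow']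
  by_cases h2 : 2 ≤ n
  · by_cases hpn : w.length ≤ n
    · rw [if_pos hpn, if_pos h2, PowerSeries.coeff_mul]
      simp only [Zser, coeff_mk]
      rw [main_Nxy w hw s hs k hk (n - w.length) (n - 2) (by omega)]
      push_cast
      rfl
    · rw [if_neg hpn, if_pos h2, PowerSeries.coeff_mul]
      symm
      apply Finset.sum_eq_zero
      rintro ⟨i, j⟩ hij
      rw [Finset.HasAntidiagonal.mem_antidiagonal] at hij
      simp only [Zser, coeff_mk]
      have hulen : (w.take (w.length - 1)).length = w.length - 1 := by
        rw [List.length_take]; omega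
      have : Nxy b w s (w.take (w.length - 1)) 0 i = 0 := by
        apply Nxy_suffix_short
        omega
      rw [this]
      simp
  · rw [if_neg h2]
    by_cases hpn : w.length ≤ n
    · rw [if_pos hpn]
      have : Nxy b w s [] k (n - w.length) = 0 :=
        Nxy_zero_short w s hw hk (by omega)
      simp [Zser, this]
    · rw [if_neg hpn]
end
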